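/- Let 0 < α ≤ 1 and l ∈ {1,2}, and define the Riesz transform of the kernel, K_l(x) := (2π)^{-2} ∫_{ℝ²} i (ξ_l/|ξ|) exp(i x·ξ − |ξ|^α) dξ (i.e. K_l = R_l G_α(1,·); the integral converges absolutely). Then sup_{x ∈ ℝ²} |x|² |K_l(x)| < +∞. -/

import Mathlib

open MeasureTheory

/-- The Riesz transform `R_l G_α(1,·)` of the fundamental solution, realized through
its Fourier symbol `iξ_l/|ξ|`:
`K_l(x) = (2π)^{-2} ∫ i (ξ_l/|ξ|) exp(i x·ξ - |ξ|^α) dξ`. -/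
noncomputable def rieszKernel (α : ℝ) (l : Fin 2) (x : EuclideanSpace ℝ (Fin 2)) : ℂ :=
  ((((2 * Real.pi) ^ 2)⁻¹ : ℝ) : ℂ) *
    ∫ ξ : EuclideanSpace ℝ (Fin 2),
      Complex.I * ((ξ l / ‖ξ‖ : ℝ) : ℂ) *
        Complex.exp (Complex.I * ((inner ℝ x ξ : ℝ) : ℂ) - ((‖ξ‖ ^ α : ℝ) : ℂ))

open MeasureTheory Set Metric Real
open scoped RealInnerProductSpace



/-- MVT inequality on an interval. -/
lemma mvt_icc {φ φ' : ℝ → ℝ} {a b A : ℝ}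
    (hd : ∀ t ∈ Icc a b, HasDerivAt φ (φ' t) t)
    (hA : ∀ t ∈ Icc a b, |φ' t| ≤ A)
    {s t : ℝ} (hs : s ∈ Icc a b) (ht : t ∈ Icc a b) :
    |φ t - φ s| ≤ A * |t - s| := by
  have := (convex_Icc a b).norm_image_sub_le_of_norm_hasDerivWithin_le
    (fun u hu => (hd u hu).hasDerivWithinAt) (fun u hu => by simpa using hA u hu) hs ht
  simpa using this

lemma second_diff_le {φ φ' φ'' : ℝ → ℝ} {a A : ℝ}
    (hd1 : ∀ t ∈ Icc a (a+2), HasDerivAt φ (φ' t) t)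
    (hd2 : ∀ t ∈ Icc a (a+2), HasDerivAt φ' (φ'' t) t)
    (hA : ∀ t ∈ Icc a (a+2), |φ'' t| ≤ A) :
    |φ a - 2 * φ (a+1) + φ (a+2)| ≤ A := by
  have hA0 : 0 ≤ A := le_trans (abs_nonneg _) (hA a (by constructor <;> linarith))
  set g : ℝ → ℝ := fun t => φ (t+1) - φ t with hg
  have hgd : ∀ t ∈ Icc a (a+1), HasDerivAt g (φ' (t+1) - φ' t) t := by
    intro t ht
    have h1 : HasDerivAt (fun t => φ (t+1)) (φ' (t+1)) t := by
      have := (hd1 (t+1) (by constructor <;> [linarith [ht.1]; linarith [ht.2]])).comp t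
        ((hasDerivAt_id t).add_const 1)
      simpa [Function.comp_def] using this
    exact h1.sub (hd1 t (by constructor <;> [exact ht.1; linarith [ht.2]]))
  have hgb : ∀ t ∈ Icc a (a+1), |φ' (t+1) - φ' t| ≤ A := by
    intro t ht
    have := mvt_icc hd2 hA (s := t) (t := t+1)
      (by constructor <;> [exact ht.1; linarith [ht.2]])
      (by constructor <;> [linarith [ht.1]; linarith [ht.2]])
    simpa using this
  have key : |g (a+1) - g a| ≤ A * |(a+1) - a| := mvt_icc hgd hgb
    (by constructor <;> linarith) (by constructor <;> linarith)
  have : g (a+1) - g a = φ a - 2 * φ (a+1) + φ (a+2) := by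
    simp only [hg]; ring_nf
  rw [this] at key
  simpa using key

lemma third_diff_le {φ φ' φ'' φ''' : ℝ → ℝ} {a A : ℝ}
    (hd1 : ∀ t ∈ Icc a (a+3), HasDerivAt φ (φ' t) t)
    (hd2 : ∀ t ∈ Icc a (a+3), HasDerivAt φ' (φ'' t) t)
    (hd3 : ∀ t ∈ Icc a (a+3), HasDerivAt φ'' (φ''' t) t)
    (hA : ∀ t ∈ Icc a (a+3), |φ''' t| ≤ A) :
    |φ a - 3 * φ (a+1) + 3 * φ (a+2) - φ (a+3)| ≤ A := by
  set g : ℝ → ℝ := fun t => φ (t+1) - φ t with hg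
  set g' : ℝ → ℝ := fun t => φ' (t+1) - φ' t with hg'
  have mem1 : ∀ t ∈ Icc a (a+2), t ∈ Icc a (a+3) := fun t ht => ⟨ht.1, by linarith [ht.2]⟩
  have mem2 : ∀ t ∈ Icc a (a+2), t + 1 ∈ Icc a (a+3) := fun t ht =>
    ⟨by linarith [ht.1], by linarith [ht.2]⟩
  have hgd : ∀ t ∈ Icc a (a+2), HasDerivAt g (g' t) t := by
    intro t ht
    have h1 : HasDerivAt (fun t => φ (t+1)) (φ' (t+1)) t := by
      have := (hd1 (t+1) (mem2 t ht)).comp t ((hasDerivAt_id t).add_const 1)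
      simpa [Function.comp_def] using this
    exact h1.sub (hd1 t (mem1 t ht))
  have hgd2 : ∀ t ∈ Icc a (a+2), HasDerivAt g' (φ'' (t+1) - φ'' t) t := by
    intro t ht
    have h1 : HasDerivAt (fun t => φ' (t+1)) (φ'' (t+1)) t := by
      have := (hd2 (t+1) (mem2 t ht)).comp t ((hasDerivAt_id t).add_const 1)
      simpa [Function.comp_def] using this
    exact h1.sub (hd2 t (mem1 t ht))
  have hgb : ∀ t ∈ Icc a (a+2), |φ'' (t+1) - φ'' t| ≤ A := by
    intro t ht
    have := mvt_icc hd3 hA (s := t) (t := t+1) (mem1 t ht) (mem2 t ht)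
    simpa using this
  have key := second_diff_le hgd hgd2 hgb
  have : g a - 2 * g (a+1) + g (a+2) = -(φ a - 3 * φ (a+1) + 3 * φ (a+2) - φ (a+3)) := by
    simp only [hg]; ring_nf
  rw [this, abs_neg] at key
  exact key


noncomputable def Phi (β u : ℝ) : ℝ := u ^ (-(1:ℝ)/2) * Real.exp (-(u ^ β))
noncomputable def Phi1 (β u : ℝ) : ℝ :=
  ((-(1/2)) * u ^ (-(3:ℝ)/2) + (-β) * u ^ (β - 3/2)) * Real.exp (-(u ^ β))
noncomputable def Phi2 (β u : ℝ) : ℝ :=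
  ((3/4) * u ^ (-(5:ℝ)/2) + (β*(2-β)) * u ^ (β - 5/2) + β^2 * u ^ (2*β - 5/2)) *
    Real.exp (-(u ^ β))
noncomputable def Phi3 (β u : ℝ) : ℝ :=
  ((-(15/8)) * u ^ (-(7:ℝ)/2) + (β*(2-β)*(β-5/2) - 3*β/4) * u ^ (β - 7/2)
    + (β^2*(3*β - 9/2)) * u ^ (2*β - 7/2) + (-(β^3)) * u ^ (3*β - 7/2)) * Real.exp (-(u ^ β))

lemma pow_mul_exp_neg_le {v : ℝ} (hv : 0 ≤ v) {j : ℕ} (hj : j ≤ 3) :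
    v ^ j * Real.exp (-v) ≤ 6 := by
  have h1 : v ^ j / (j.factorial : ℝ) ≤ Real.exp v := Real.pow_div_factorial_le_exp v hv j
  have h2 : (j.factorial : ℝ) ≤ 6 := by interval_cases j <;> norm_num [Nat.factorial]
  have h3 : (0:ℝ) < Real.exp v := Real.exp_pos v
  have h4 : v ^ j ≤ 6 * Real.exp v := by
    have hf : (0:ℝ) < (j.factorial : ℝ) := by positivity
    calc v ^ j = v ^ j / (j.factorial:ℝ) * (j.factorial:ℝ) := by field_simp
    _ ≤ Real.exp v * 6 := by
        apply mul_le_mul h1 h2 hf.le (Real.exp_pos v).le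
    _ = 6 * Real.exp v := by ring
  calc v ^ j * Real.exp (-v) ≤ (6 * Real.exp v) * Real.exp (-v) := by
        apply mul_le_mul_of_nonneg_right h4 (Real.exp_pos _).le
  _ = 6 := by rw [mul_assoc, ← Real.exp_add]; simp

lemma aux_rpow {β u : ℝ} (hβ : 0 < β) (hu : 0 < u) (j : ℕ) (hj : j ≤ 3) (p : ℝ) :
    u ^ ((j:ℝ) * β + p) * Real.exp (-(u ^ β)) ≤ 6 * u ^ p := by
  have h1 : u ^ ((j:ℝ) * β + p) = (u ^ β) ^ j * u ^ p := by
    rw [Real.rpow_add hu, ← Real.rpow_natCast (u ^ β) j, ← Real.rpow_mul hu.le]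
    ring_nf
  rw [h1]
  have h2 : (u ^ β) ^ j * Real.exp (-(u ^ β)) ≤ 6 :=
    pow_mul_exp_neg_le (Real.rpow_nonneg hu.le β) hj
  have hp : (0:ℝ) ≤ u ^ p := Real.rpow_nonneg hu.le p
  calc (u ^ β) ^ j * u ^ p * Real.exp (-(u ^ β))
      = ((u ^ β) ^ j * Real.exp (-(u ^ β))) * u ^ p := by ring
  _ ≤ 6 * u ^ p := mul_le_mul_of_nonneg_right h2 hp

section bounds
variable {β u : ℝ} (hβ : 0 < β) (hβ2 : β ≤ 1/2) (hu : 0 < u)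
include hβ hβ2 hu

lemma Phi1_bound : |Phi1 β u| ≤ 15 * u ^ (-(3:ℝ)/2) := by
  have a0 : (0:ℝ) ≤ u ^ (-(3:ℝ)/2) := Real.rpow_nonneg hu.le _
  have a1 : (0:ℝ) ≤ u ^ (β - 3/2) := Real.rpow_nonneg hu.le _
  have hE : (0:ℝ) < Real.exp (-(u ^ β)) := Real.exp_pos _
  have hE1 : Real.exp (-(u ^ β)) ≤ 1 :=
    Real.exp_le_one_iff.2 (neg_nonpos.2 (Real.rpow_nonneg hu.le β))
  have b1 : u ^ (β - 3/2) * Real.exp (-(u ^ β)) ≤ 6 * u ^ (-(3:ℝ)/2) := by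
    have := aux_rpow hβ hu 1 (by norm_num) (-(3:ℝ)/2)
    rw [show ((1:ℕ):ℝ) * β + -(3:ℝ)/2 = β - 3/2 by push_cast; ring] at this
    exact this
  have b0 : u ^ (-(3:ℝ)/2) * Real.exp (-(u ^ β)) ≤ u ^ (-(3:ℝ)/2) := by
    nlinarith
  calc |Phi1 β u| = |(-(1/2)) * u ^ (-(3:ℝ)/2) + (-β) * u ^ (β - 3/2)| * Real.exp (-(u ^ β)) := by
        rw [Phi1, abs_mul, abs_of_pos hE]
  _ ≤ ((1/2) * u ^ (-(3:ℝ)/2) + β * u ^ (β - 3/2)) * Real.exp (-(u ^ β)) := by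
        apply mul_le_mul_of_nonneg_right _ hE.le
        refine (abs_add_le _ _).trans ?_
        rw [abs_mul, abs_mul, abs_of_nonneg a0, abs_of_nonneg a1]
        gcongr
        · rw [abs_neg, abs_of_nonneg] <;> norm_num
        · rw [abs_neg, abs_of_pos hβ]
  _ = (1/2) * (u ^ (-(3:ℝ)/2) * Real.exp (-(u ^ β))) + β * (u ^ (β-3/2) * Real.exp (-(u^β))) := by
        ring
  _ ≤ (1/2) * (u ^ (-(3:ℝ)/2)) + β * (6 * u ^ (-(3:ℝ)/2)) := by
        gcongr
  _ ≤ 15 * u ^ (-(3:ℝ)/2) := by nlinarith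

lemma Phi2_bound : |Phi2 β u| ≤ 50 * u ^ (-(5:ℝ)/2) := by
  have a0 : (0:ℝ) ≤ u ^ (-(5:ℝ)/2) := Real.rpow_nonneg hu.le _
  have a1 : (0:ℝ) ≤ u ^ (β - 5/2) := Real.rpow_nonneg hu.le _
  have a2 : (0:ℝ) ≤ u ^ (2*β - 5/2) := Real.rpow_nonneg hu.le _
  have hE : (0:ℝ) < Real.exp (-(u ^ β)) := Real.exp_pos _
  have hE1 : Real.exp (-(u ^ β)) ≤ 1 :=
    Real.exp_le_one_iff.2 (neg_nonpos.2 (Real.rpow_nonneg hu.le β))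
  have b1 : u ^ (β - 5/2) * Real.exp (-(u ^ β)) ≤ 6 * u ^ (-(5:ℝ)/2) := by
    have := aux_rpow hβ hu 1 (by norm_num) (-(5:ℝ)/2)
    rw [show ((1:ℕ):ℝ) * β + -(5:ℝ)/2 = β - 5/2 by push_cast; ring] at this
    exact this
  have b2 : u ^ (2*β - 5/2) * Real.exp (-(u ^ β)) ≤ 6 * u ^ (-(5:ℝ)/2) := by
    have := aux_rpow hβ hu 2 (by norm_num) (-(5:ℝ)/2)
    rw [show ((2:ℕ):ℝ) * β + -(5:ℝ)/2 = 2*β - 5/2 by push_cast; ring] at this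
    exact this
  have b0 : u ^ (-(5:ℝ)/2) * Real.exp (-(u ^ β)) ≤ u ^ (-(5:ℝ)/2) := by nlinarith
  calc |Phi2 β u|
      = |(3/4) * u ^ (-(5:ℝ)/2) + (β*(2-β)) * u ^ (β - 5/2) + β^2 * u ^ (2*β - 5/2)| *
        Real.exp (-(u ^ β)) := by rw [Phi2, abs_mul, abs_of_pos hE]
  _ ≤ ((3/4) * u ^ (-(5:ℝ)/2) + 1 * u ^ (β - 5/2) + (1/4) * u ^ (2*β - 5/2)) *
        Real.exp (-(u ^ β)) := by
        apply mul_le_mul_of_nonneg_right _ hE.le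
        refine (abs_add_le _ _).trans (add_le_add ((abs_add_le _ _).trans (add_le_add ?_ ?_)) ?_)
        · rw [abs_mul, abs_of_nonneg a0]
          apply mul_le_mul_of_nonneg_right _ a0
          rw [abs_of_nonneg (by norm_num : (0:ℝ) ≤ 3/4)]
        · rw [abs_mul, abs_of_nonneg a1]
          apply mul_le_mul_of_nonneg_right _ a1
          rw [abs_of_nonneg (by nlinarith)]; nlinarith
        · rw [abs_mul, abs_of_nonneg a2]
          apply mul_le_mul_of_nonneg_right _ a2
          rw [abs_of_nonneg (by positivity)]; nlinarith
  _ = (3/4) * (u ^ (-(5:ℝ)/2) * Real.exp (-(u ^ β)))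
      + 1 * (u ^ (β - 5/2) * Real.exp (-(u ^ β)))
      + (1/4) * (u ^ (2*β - 5/2) * Real.exp (-(u ^ β))) := by ring
  _ ≤ (3/4) * (u ^ (-(5:ℝ)/2)) + 1 * (6 * u ^ (-(5:ℝ)/2)) + (1/4) * (6 * u ^ (-(5:ℝ)/2)) := by
        gcongr
  _ ≤ 50 * u ^ (-(5:ℝ)/2) := by nlinarith

lemma Phi3_bound : |Phi3 β u| ≤ 200 * u ^ (-(7:ℝ)/2) := by
  have a0 : (0:ℝ) ≤ u ^ (-(7:ℝ)/2) := Real.rpow_nonneg hu.le _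
  have a1 : (0:ℝ) ≤ u ^ (β - 7/2) := Real.rpow_nonneg hu.le _
  have a2 : (0:ℝ) ≤ u ^ (2*β - 7/2) := Real.rpow_nonneg hu.le _
  have a3 : (0:ℝ) ≤ u ^ (3*β - 7/2) := Real.rpow_nonneg hu.le _
  have hE : (0:ℝ) < Real.exp (-(u ^ β)) := Real.exp_pos _
  have hE1 : Real.exp (-(u ^ β)) ≤ 1 :=
    Real.exp_le_one_iff.2 (neg_nonpos.2 (Real.rpow_nonneg hu.le β))
  have b1 : u ^ (β - 7/2) * Real.exp (-(u ^ β)) ≤ 6 * u ^ (-(7:ℝ)/2) := by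
    have := aux_rpow hβ hu 1 (by norm_num) (-(7:ℝ)/2)
    rw [show ((1:ℕ):ℝ) * β + -(7:ℝ)/2 = β - 7/2 by push_cast; ring] at this
    exact this
  have b2 : u ^ (2*β - 7/2) * Real.exp (-(u ^ β)) ≤ 6 * u ^ (-(7:ℝ)/2) := by
    have := aux_rpow hβ hu 2 (by norm_num) (-(7:ℝ)/2)
    rw [show ((2:ℕ):ℝ) * β + -(7:ℝ)/2 = 2*β - 7/2 by push_cast; ring] at this
    exact this
  have b3 : u ^ (3*β - 7/2) * Real.exp (-(u ^ β)) ≤ 6 * u ^ (-(7:ℝ)/2) := by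
    have := aux_rpow hβ hu 3 (by norm_num) (-(7:ℝ)/2)
    rw [show ((3:ℕ):ℝ) * β + -(7:ℝ)/2 = 3*β - 7/2 by push_cast; ring] at this
    exact this
  have b0 : u ^ (-(7:ℝ)/2) * Real.exp (-(u ^ β)) ≤ u ^ (-(7:ℝ)/2) := by nlinarith
  calc |Phi3 β u|
      = |(-(15/8)) * u ^ (-(7:ℝ)/2) + (β*(2-β)*(β-5/2) - 3*β/4) * u ^ (β - 7/2)
        + (β^2*(3*β - 9/2)) * u ^ (2*β - 7/2) + (-(β^3)) * u ^ (3*β - 7/2)| *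
        Real.exp (-(u ^ β)) := by rw [Phi3, abs_mul, abs_of_pos hE]
  _ ≤ ((15/8) * u ^ (-(7:ℝ)/2) + 3 * u ^ (β - 7/2)
        + (9/8) * u ^ (2*β - 7/2) + (1/8) * u ^ (3*β - 7/2)) * Real.exp (-(u ^ β)) := by
        apply mul_le_mul_of_nonneg_right _ hE.le
        have e1 : β*(2-β)*(5/2-β) ≤ 5*β := by nlinarith [mul_nonneg hβ.le hβ.le]
        have e2 : 0 ≤ β*(2-β)*(5/2-β) := by
          apply mul_nonneg (mul_nonneg hβ.le (by linarith)) (by linarith)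
        have e3 : β^3 ≤ (1/2)^3 := pow_le_pow_left₀ hβ.le hβ2 3
        refine (abs_add_le _ _).trans (add_le_add ((abs_add_le _ _).trans (add_le_add
          ((abs_add_le _ _).trans (add_le_add ?_ ?_)) ?_)) ?_)
        · rw [abs_mul, abs_of_nonneg a0]
          apply mul_le_mul_of_nonneg_right _ a0
          rw [abs_neg, abs_of_nonneg (by norm_num : (0:ℝ) ≤ 15/8)]
        · rw [abs_mul, abs_of_nonneg a1]
          apply mul_le_mul_of_nonneg_right _ a1
          refine abs_le.2 ⟨by nlinarith, by nlinarith⟩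
        · rw [abs_mul, abs_of_nonneg a2]
          apply mul_le_mul_of_nonneg_right _ a2
          refine abs_le.2 ⟨by nlinarith, by nlinarith⟩
        · rw [abs_mul, abs_of_nonneg a3]
          apply mul_le_mul_of_nonneg_right _ a3
          rw [abs_neg, abs_of_nonneg (by positivity)]; nlinarith
  _ = (15/8) * (u ^ (-(7:ℝ)/2) * Real.exp (-(u ^ β)))
      + 3 * (u ^ (β - 7/2) * Real.exp (-(u ^ β)))
      + (9/8) * (u ^ (2*β - 7/2) * Real.exp (-(u ^ β)))
      + (1/8) * (u ^ (3*β - 7/2) * Real.exp (-(u ^ β))) := by ring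
  _ ≤ (15/8) * (u ^ (-(7:ℝ)/2)) + 3 * (6 * u ^ (-(7:ℝ)/2)) + (9/8) * (6 * u ^ (-(7:ℝ)/2))
      + (1/8) * (6 * u ^ (-(7:ℝ)/2)) := by gcongr
  _ ≤ 200 * u ^ (-(7:ℝ)/2) := by nlinarith

end bounds

lemma term_deriv (β c p : ℝ) {u : ℝ} (hu : 0 < u) :
    HasDerivAt (fun v => c * v ^ p * Real.exp (-(v ^ β)))
      ((c * p * u ^ (p-1) + (-β) * c * u ^ (p+β-1)) * Real.exp (-(u ^ β))) u := by
  have hp : HasDerivAt (fun v : ℝ => v ^ p) (p * u ^ (p-1)) u :=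
    Real.hasDerivAt_rpow_const (Or.inl hu.ne')
  have hb : HasDerivAt (fun v : ℝ => v ^ β) (β * u ^ (β-1)) u :=
    Real.hasDerivAt_rpow_const (Or.inl hu.ne')
  have hexp : HasDerivAt (fun v : ℝ => Real.exp (-(v ^ β)))
      (Real.exp (-(u ^ β)) * (-(β * u ^ (β-1)))) u := hb.neg.exp
  have H := (hp.const_mul c).mul hexp
  refine H.congr_deriv ?_
  have hadd : u ^ (p+β-1) = u ^ p * u ^ (β-1) := by
    rw [← Real.rpow_add hu]; ring_nf
  rw [hadd]; ring

lemma hasDerivAt_Phi {β u : ℝ} (hu : 0 < u) : HasDerivAt (Phi β) (Phi1 β u) u := by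
  have H := term_deriv β 1 (-(1:ℝ)/2) hu
  have hfun : Phi β = fun v => 1 * v ^ (-(1:ℝ)/2) * Real.exp (-(v ^ β)) := by
    funext v; simp [Phi]
  rw [hfun]
  convert H using 1
  unfold Phi1; ring_nf

lemma hasDerivAt_Phi1 {β u : ℝ} (hu : 0 < u) : HasDerivAt (Phi1 β) (Phi2 β u) u := by
  have H := (term_deriv β (-(1/2)) (-(3:ℝ)/2) hu).add (term_deriv β (-β) (β - 3/2) hu)
  have hfun : Phi1 β = fun v => ((-(1/2)) * v ^ (-(3:ℝ)/2) * Real.exp (-(v ^ β)) +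
      (-β) * v ^ (β - 3/2) * Real.exp (-(v ^ β))) := by
    funext v; unfold Phi1; ring
  rw [hfun]
  refine H.congr_deriv ?_
  unfold Phi2; ring_nf

lemma hasDerivAt_Phi2 {β u : ℝ} (hu : 0 < u) : HasDerivAt (Phi2 β) (Phi3 β u) u := by
  have H := ((term_deriv β (3/4) (-(5:ℝ)/2) hu).add
    (term_deriv β (β*(2-β)) (β - 5/2) hu)).add (term_deriv β (β^2) (2*β - 5/2) hu)
  have hfun : Phi2 β = fun v => (((3/4) * v ^ (-(5:ℝ)/2) * Real.exp (-(v ^ β)) +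
      (β*(2-β)) * v ^ (β - 5/2) * Real.exp (-(v ^ β))) +
      (β^2) * v ^ (2*β - 5/2) * Real.exp (-(v ^ β))) := by
    funext v; unfold Phi2; ring
  rw [hfun]
  refine H.congr_deriv ?_
  unfold Phi3; ring_nf

abbrev E2 := EuclideanSpace ℝ (Fin 2)

lemma coord_le_norm (ξ : E2) (l : Fin 2) : |ξ l| ≤ ‖ξ‖ := by
  rw [EuclideanSpace.norm_eq ξ]
  have h2 : |ξ l| = Real.sqrt (‖ξ l‖^2) := by rw [Real.sqrt_sq_eq_abs]; simp
  rw [h2]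
  exact Real.sqrt_le_sqrt (Finset.single_le_sum (f := fun i => ‖ξ i‖^2)
    (fun i _ => by positivity) (Finset.mem_univ l))

lemma rpow_half_bound {m q : ℝ} (hm : 0 < m) (hq : m^2 ≤ q) (k : ℕ) :
    q ^ (-(k:ℝ)/2) ≤ (m ^ k)⁻¹ := by
  have hq0 : (0:ℝ) < m^2 := by positivity
  have h1 : q ^ (-(k:ℝ)/2) ≤ (m^2) ^ (-(k:ℝ)/2) :=
    Real.rpow_le_rpow_of_nonpos hq0 hq
      (by have : (0:ℝ) ≤ (k:ℝ) := Nat.cast_nonneg k; linarith)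
  refine h1.trans_eq ?_
  rw [← Real.rpow_natCast m 2, ← Real.rpow_mul hm.le,
    show (((2:ℕ):ℝ)) * (-(k:ℝ)/2) = -(k:ℝ) by push_cast; ring,
    Real.rpow_neg hm.le, Real.rpow_natCast]

/-- The kernel profile. -/
noncomputable def Fker (α : ℝ) (l : Fin 2) (η : E2) : ℝ := η l * Phi (α/2) (‖η‖^2)

theorem key_estimate (α : ℝ) (hα : 0 < α) (hα1 : α ≤ 1) (l : Fin 2)
    (ξ h : E2) (hh : 0 < ‖h‖) (hr4 : 4 * ‖h‖ ≤ ‖ξ‖) :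
    |Fker α l ξ - 3 * Fker α l (ξ + h) + 3 * Fker α l (ξ + (2:ℝ) • h)
      - Fker α l (ξ + (3:ℝ) • h)| ≤ 2000000000 * ‖h‖^3 / ‖ξ‖^3 := by
  set β := α/2 with hβdef
  have hβ : 0 < β := by positivity
  have hβ2 : β ≤ 1/2 := by rw [hβdef]; linarith
  set r := ‖ξ‖ with hrdef
  have hr0 : 0 < r := lt_of_lt_of_le (by positivity) hr4
  -- the quadratic q
  set q : ℝ → ℝ := fun t => ‖ξ‖^2 + (2 * ⟪ξ,h⟫) * t + ‖h‖^2 * t^2 with hqdef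
  set qd : ℝ → ℝ := fun t => 2 * ⟪ξ,h⟫ + 2*‖h‖^2 * t with hqddef
  have qeq : ∀ t : ℝ, q t = ‖ξ + t • h‖^2 := by
    intro t
    rw [hqdef]
    simp only
    rw [norm_add_sq_real, real_inner_smul_right, norm_smul]
    simp [mul_pow]
    ring
  have qdeq : ∀ t : ℝ, qd t = 2 * ⟪ξ + t • h, h⟫ := by
    intro t
    rw [hqddef]
    simp only
    rw [inner_add_left, real_inner_smul_left, real_inner_self_eq_norm_sq]
    ring
  have hqd : ∀ t : ℝ, HasDerivAt q (qd t) t := by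
    intro t
    have h1 : HasDerivAt (fun t : ℝ => (2 * ⟪ξ,h⟫) * t) (2 * ⟪ξ,h⟫) t := by
      simpa using (hasDerivAt_id t).const_mul (2 * ⟪ξ,h⟫)
    have h2 : HasDerivAt (fun t : ℝ => ‖h‖^2 * t^2) (‖h‖^2 * (2*t)) t := by
      have := (hasDerivAt_pow 2 t).const_mul (‖h‖^2)
      simpa using this
    have H := (h1.add h2).const_add (‖ξ‖^2)
    have H2 : HasDerivAt q (2 * ⟪ξ,h⟫ + ‖h‖^2 * (2*t)) t := by
      simpa [hqdef, add_assoc] using H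
    convert H2 using 1
    simp only [hqddef]
    ring
  -- norm bounds along the segment
  have hseg : ∀ t ∈ Icc (0:ℝ) 3, r/4 ≤ ‖ξ + t • h‖ ∧ ‖ξ + t • h‖ ≤ 2*r := by
    intro t ht
    have hts : ‖t • h‖ ≤ 3 * ‖h‖ := by
      rw [norm_smul, Real.norm_eq_abs, abs_of_nonneg ht.1]
      exact mul_le_mul_of_nonneg_right ht.2 hh.le
    constructor
    · have h1 : ‖ξ‖ ≤ ‖ξ + t • h‖ + ‖t • h‖ := by
        calc ‖ξ‖ = ‖(ξ + t • h) - t • h‖ := by rw [add_sub_cancel_right]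
        _ ≤ ‖ξ + t • h‖ + ‖t • h‖ := norm_sub_le _ _
      have : 3 * ‖h‖ ≤ 3/4 * r := by linarith
      linarith
    · calc ‖ξ + t • h‖ ≤ ‖ξ‖ + ‖t • h‖ := norm_add_le _ _
      _ ≤ r + 3 * ‖h‖ := by linarith
      _ ≤ 2*r := by linarith
  have hqb : ∀ t ∈ Icc (0:ℝ) 3, (r/4)^2 ≤ q t ∧ q t ≤ (2*r)^2 := by
    intro t ht
    obtain ⟨h1, h2⟩ := hseg t ht
    rw [qeq t]
    constructor
    · apply pow_le_pow_left₀ (by positivity) h1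
    · apply pow_le_pow_left₀ (norm_nonneg _) h2
  have hqpos : ∀ t ∈ Icc (0:ℝ) 3, 0 < q t := fun t ht =>
    lt_of_lt_of_le (by positivity) (hqb t ht).1
  have hqdb : ∀ t ∈ Icc (0:ℝ) 3, |qd t| ≤ 4*r*‖h‖ := by
    intro t ht
    rw [qdeq t, abs_mul]
    have := abs_real_inner_le_norm (ξ + t • h) h
    have h2 := (hseg t ht).2
    calc |(2:ℝ)| * |⟪ξ + t • h, h⟫| ≤ 2 * (‖ξ + t • h‖ * ‖h‖) := by
          rw [abs_of_nonneg (by norm_num : (0:ℝ) ≤ 2)]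
          exact mul_le_mul_of_nonneg_left this (by norm_num)
    _ ≤ 2 * ((2*r) * ‖h‖) := by
          apply mul_le_mul_of_nonneg_left _ (by norm_num)
          exact mul_le_mul_of_nonneg_right h2 (norm_nonneg _)
    _ = 4*r*‖h‖ := by ring
  -- the composite functions
  set φ : ℝ → ℝ := fun t => Phi β (q t) with hφdef
  set φ1 : ℝ → ℝ := fun t => Phi1 β (q t) * qd t with hφ1def
  set φ2 : ℝ → ℝ := fun t => Phi2 β (q t) * (qd t)^2 + Phi1 β (q t) * (2*‖h‖^2) with hφ2def
  set φ3 : ℝ → ℝ := fun t => Phi3 β (q t) * (qd t)^3 + Phi2 β (q t) * (qd t) * (6*‖h‖^2)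
    with hφ3def
  have hder1 : ∀ t ∈ Icc (0:ℝ) 3, HasDerivAt φ (φ1 t) t := by
    intro t ht
    exact (hasDerivAt_Phi (hqpos t ht)).comp t (hqd t)
  have hqd' : ∀ t : ℝ, HasDerivAt qd (2*‖h‖^2) t := by
    intro t
    have h1 : HasDerivAt (fun t : ℝ => 2*‖h‖^2 * t) (2*‖h‖^2) t := by
      simpa using (hasDerivAt_id t).const_mul (2*‖h‖^2)
    simpa [hqddef] using h1.const_add (2 * ⟪ξ,h⟫)
  have hder2 : ∀ t ∈ Icc (0:ℝ) 3, HasDerivAt φ1 (φ2 t) t := by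
    intro t ht
    have H := ((hasDerivAt_Phi1 (β := β) (hqpos t ht)).comp t (hqd t)).mul (hqd' t)
    refine H.congr_deriv ?_
    simp only [hφ2def, Function.comp]
    ring
  have hder3 : ∀ t ∈ Icc (0:ℝ) 3, HasDerivAt φ2 (φ3 t) t := by
    intro t ht
    have ha := ((hasDerivAt_Phi2 (β := β) (hqpos t ht)).comp t (hqd t)).mul ((hqd' t).pow 2)
    have hb := ((hasDerivAt_Phi1 (β := β) (hqpos t ht)).comp t (hqd t)).mul_const (2*‖h‖^2)
    have H := ha.add hb
    refine H.congr_deriv ?_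
    simp only [hφ3def, Function.comp, pow_one, Pi.pow_apply]
    ring
  -- bounds on φ2 and φ3 on the segment
  have hb2 : ∀ t ∈ Icc (0:ℝ) 3, |φ2 t| ≤ 1000000 * ‖h‖^2 / r^3 := by
    intro t ht
    have hqp := hqpos t ht
    have hm : (0:ℝ) < r/4 := by positivity
    have h5 : (q t) ^ (-(5:ℝ)/2) ≤ ((r/4) ^ 5)⁻¹ := by
      have := rpow_half_bound hm (hqb t ht).1 5
      rwa [show (-((5:ℕ):ℝ)/2) = (-(5:ℝ)/2) by norm_num] at this
    have h3 : (q t) ^ (-(3:ℝ)/2) ≤ ((r/4) ^ 3)⁻¹ := by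
      have := rpow_half_bound hm (hqb t ht).1 3
      rwa [show (-((3:ℕ):ℝ)/2) = (-(3:ℝ)/2) by norm_num] at this
    have hP2 := (Phi2_bound hβ hβ2 hqp).trans (mul_le_mul_of_nonneg_left h5 (by norm_num))
    have hP1 := (Phi1_bound hβ hβ2 hqp).trans (mul_le_mul_of_nonneg_left h3 (by norm_num))
    have hqdb' := hqdb t ht
    have hq2 : (qd t)^2 ≤ (4*r*‖h‖)^2 := by
      nlinarith [sq_abs (qd t), abs_nonneg (qd t)]
    have step1 : |φ2 t| ≤ (50 * ((r/4) ^ 5)⁻¹) * (4*r*‖h‖)^2 + (15 * ((r/4) ^ 3)⁻¹) * (2*‖h‖^2) := by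
      simp only [hφ2def]
      refine (abs_add_le _ _).trans ?_
      rw [abs_mul, abs_mul, abs_pow]
      have hq2' : |qd t|^2 ≤ (4*r*‖h‖)^2 := by rw [sq_abs]; exact hq2
      have t1 : |Phi2 β (q t)| * |qd t|^2 ≤ (50 * ((r/4) ^ 5)⁻¹) * (4*r*‖h‖)^2 :=
        mul_le_mul hP2 hq2' (by positivity) (by positivity)
      have t2 : |Phi1 β (q t)| * |2*‖h‖^2| ≤ (15 * ((r/4) ^ 3)⁻¹) * (2*‖h‖^2) := by
        rw [abs_of_nonneg (by positivity : (0:ℝ) ≤ 2*‖h‖^2)]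
        exact mul_le_mul_of_nonneg_right hP1 (by positivity)
      linarith
    refine step1.trans ?_
    have heq : (50 * ((r/4) ^ 5)⁻¹) * (4*r*‖h‖)^2 + (15 * ((r/4) ^ 3)⁻¹) * (2*‖h‖^2)
        = 821120 * ‖h‖^2 / r^3 := by
      field_simp
      ring
    rw [heq]
    gcongr
    norm_num
  have hb3 : ∀ t ∈ Icc (0:ℝ) 3, |φ3 t| ≤ 1000000000 * ‖h‖^3 / r^4 := by
    intro t ht
    have hqp := hqpos t ht
    have hm : (0:ℝ) < r/4 := by positivity
    have h7 : (q t) ^ (-(7:ℝ)/2) ≤ ((r/4) ^ 7)⁻¹ := by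
      have := rpow_half_bound hm (hqb t ht).1 7
      rwa [show (-((7:ℕ):ℝ)/2) = (-(7:ℝ)/2) by norm_num] at this
    have h5 : (q t) ^ (-(5:ℝ)/2) ≤ ((r/4) ^ 5)⁻¹ := by
      have := rpow_half_bound hm (hqb t ht).1 5
      rwa [show (-((5:ℕ):ℝ)/2) = (-(5:ℝ)/2) by norm_num] at this
    have hP3 := (Phi3_bound hβ hβ2 hqp).trans (mul_le_mul_of_nonneg_left h7 (by norm_num))
    have hP2 := (Phi2_bound hβ hβ2 hqp).trans (mul_le_mul_of_nonneg_left h5 (by norm_num))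
    have hqdb' := hqdb t ht
    have habs3 : |qd t|^3 ≤ (4*r*‖h‖)^3 := by
      apply pow_le_pow_left₀ (abs_nonneg _) hqdb'
    have step1 : |φ3 t| ≤ (200 * ((r/4) ^ 7)⁻¹) * (4*r*‖h‖)^3
        + (50 * ((r/4) ^ 5)⁻¹) * (4*r*‖h‖) * (6*‖h‖^2) := by
      simp only [hφ3def]
      refine (abs_add_le _ _).trans ?_
      rw [abs_mul, abs_mul, abs_mul, abs_pow]
      
      have t1 : |Phi3 β (q t)| * |qd t|^3 ≤ (200 * ((r/4) ^ 7)⁻¹) * (4*r*‖h‖)^3 :=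
        mul_le_mul hP3 habs3 (by positivity) (by positivity)
      have t2 : |Phi2 β (q t)| * |qd t| * |6*‖h‖^2|
          ≤ (50 * ((r/4) ^ 5)⁻¹) * (4*r*‖h‖) * (6*‖h‖^2) := by
        rw [abs_of_nonneg (by positivity : (0:ℝ) ≤ 6*‖h‖^2)]
        apply mul_le_mul_of_nonneg_right _ (by positivity)
        exact mul_le_mul hP2 hqdb' (abs_nonneg _) (by positivity)
      linarith
    refine step1.trans ?_
    have heq : (200 * ((r/4) ^ 7)⁻¹) * (4*r*‖h‖)^3
        + (50 * ((r/4) ^ 5)⁻¹) * (4*r*‖h‖) * (6*‖h‖^2) = 210944000 * ‖h‖^3 / r^4 := by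
      field_simp
      ring
    rw [heq]
    gcongr
    norm_num
  -- apply the finite-difference lemmas
  have hIcc13 : Icc (1:ℝ) 3 ⊆ Icc (0:ℝ) 3 := Icc_subset_Icc (by norm_num) le_rfl
  have hthird : |φ 0 - 3 * φ 1 + 3 * φ 2 - φ 3| ≤ 1000000000 * ‖h‖^3 / r^4 := by
    have H := third_diff_le (a := (0:ℝ)) (A := 1000000000 * ‖h‖^3 / r^4)
      (fun t ht => hder1 t ⟨by linarith [ht.1], by linarith [ht.2]⟩)
      (fun t ht => hder2 t ⟨by linarith [ht.1], by linarith [ht.2]⟩)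
      (fun t ht => hder3 t ⟨by linarith [ht.1], by linarith [ht.2]⟩)
      (fun t ht => hb3 t ⟨by linarith [ht.1], by linarith [ht.2]⟩)
    norm_num at H
    exact H
  have hsecond : |φ 1 - 2 * φ 2 + φ 3| ≤ 1000000 * ‖h‖^2 / r^3 := by
    have H := second_diff_le (a := (1:ℝ)) (A := 1000000 * ‖h‖^2 / r^3)
      (fun t ht => hder1 t ⟨by linarith [ht.1], by linarith [ht.2]⟩)
      (fun t ht => hder2 t ⟨by linarith [ht.1], by linarith [ht.2]⟩)
      (fun t ht => hb2 t ⟨by linarith [ht.1], by linarith [ht.2]⟩)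
    norm_num at H
    exact H
  -- express the finite difference of Fker
  have hcoord : ∀ t : ℝ, (ξ + t • h) l = ξ l + t * h l := by
    intro t
    simp [PiLp.add_apply, PiLp.smul_apply, smul_eq_mul]
  have hFt : ∀ t : ℝ, Fker α l (ξ + t • h) = (ξ l + t * h l) * φ t := by
    intro t
    simp only [Fker, hφdef, hcoord t, ← qeq t]
    rw [hβdef]
  have e0 : Fker α l ξ = ξ l * φ 0 := by
    have h00 : ξ = ξ + (0:ℝ) • h := by simp
    rw [h00, hFt 0]
    norm_num
  have e1 : Fker α l (ξ + h) = (ξ l + h l) * φ 1 := by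
    have h11 : ξ + h = ξ + (1:ℝ) • h := by rw [one_smul]
    rw [h11, hFt 1]
    norm_num
  have e2 : Fker α l (ξ + (2:ℝ) • h) = (ξ l + 2 * h l) * φ 2 := hFt 2
  have e3 : Fker α l (ξ + (3:ℝ) • h) = (ξ l + 3 * h l) * φ 3 := hFt 3
  have ecomb : Fker α l ξ - 3 * Fker α l (ξ + h) + 3 * Fker α l (ξ + (2:ℝ) • h)
      - Fker α l (ξ + (3:ℝ) • h)
      = ξ l * (φ 0 - 3 * φ 1 + 3 * φ 2 - φ 3) - 3 * h l * (φ 1 - 2 * φ 2 + φ 3) := by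
    rw [e0, e1, e2, e3]; ring
  rw [ecomb]
  have hcl := coord_le_norm ξ l
  have hhl := coord_le_norm h l
  have habs1 : |ξ l * (φ 0 - 3 * φ 1 + 3 * φ 2 - φ 3)|
      = |ξ l| * |φ 0 - 3 * φ 1 + 3 * φ 2 - φ 3| := abs_mul _ _
  have habs2 : |3 * h l * (φ 1 - 2 * φ 2 + φ 3)| = 3 * |h l| * |φ 1 - 2 * φ 2 + φ 3| := by
    rw [abs_mul, abs_mul]
    norm_num
  calc |ξ l * (φ 0 - 3 * φ 1 + 3 * φ 2 - φ 3) - 3 * h l * (φ 1 - 2 * φ 2 + φ 3)|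
      ≤ |ξ l| * |φ 0 - 3 * φ 1 + 3 * φ 2 - φ 3| + 3 * |h l| * |φ 1 - 2 * φ 2 + φ 3| := by
        rw [← habs1, ← habs2]
        exact abs_sub _ _
  _ ≤ r * (1000000000 * ‖h‖^3 / r^4) + 3 * ‖h‖ * (1000000 * ‖h‖^2 / r^3) := by
        have m1 : |ξ l| * |φ 0 - 3 * φ 1 + 3 * φ 2 - φ 3| ≤ r * (1000000000 * ‖h‖^3 / r^4) :=
          mul_le_mul hcl hthird (abs_nonneg _) hr0.le
        have m2 : 3 * |h l| * |φ 1 - 2 * φ 2 + φ 3| ≤ 3 * ‖h‖ * (1000000 * ‖h‖^2 / r^3) := by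
          apply mul_le_mul _ hsecond (abs_nonneg _) (by positivity)
          linarith
        linarith
  _ = (1000000000 + 3000000) * ‖h‖^3 / r^3 := by
        rw [hrdef] at hr0 ⊢
        field_simp
        ring
  _ ≤ 2000000000 * ‖h‖^3 / r^3 := by
        gcongr
        norm_num

noncomputable def F0 (α : ℝ) (l : Fin 2) (ξ : E2) : ℝ :=
  (ξ l / ‖ξ‖) * Real.exp (-(‖ξ‖ ^ α))

section main

lemma F0_eq_Fker (hα : 0 < α) (l : Fin 2) (ξ : E2) : F0 α l ξ = Fker α l ξ := by
  rcases eq_or_ne ξ 0 with rfl | hξ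
  · simp [F0, Fker]
  · have hn : 0 < ‖ξ‖ := norm_pos_iff.2 hξ
    rw [F0, Fker, Phi]
    have h1 : ((‖ξ‖^2 : ℝ)) ^ (-(1:ℝ)/2) = ‖ξ‖⁻¹ := by
      rw [← Real.rpow_natCast ‖ξ‖ 2, ← Real.rpow_mul (norm_nonneg _),
        show ((2:ℕ):ℝ) * (-(1:ℝ)/2) = -1 by push_cast; ring, Real.rpow_neg_one]
    have h2 : ((‖ξ‖^2 : ℝ)) ^ (α/2) = ‖ξ‖ ^ α := by
      rw [← Real.rpow_natCast ‖ξ‖ 2, ← Real.rpow_mul (norm_nonneg _),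
        show ((2:ℕ):ℝ) * (α/2) = α by push_cast; ring]
    rw [h1, h2]
    field_simp
  
lemma F0_bound {α : ℝ} (l : Fin 2) (ξ : E2) : |F0 α l ξ| ≤ Real.exp (-(‖ξ‖ ^ α)) := by
  rw [F0, abs_mul, abs_of_pos (Real.exp_pos _)]
  have h1 : |ξ l / ‖ξ‖| ≤ 1 := by
    rcases eq_or_ne ξ 0 with rfl | hξ
    · simp
    · have hn : 0 < ‖ξ‖ := norm_pos_iff.2 hξ
      rw [abs_div, abs_of_pos hn, div_le_one hn]
      exact coord_le_norm ξ l
  calc |ξ l / ‖ξ‖| * Real.exp (-(‖ξ‖ ^ α)) ≤ 1 * Real.exp (-(‖ξ‖ ^ α)) :=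
        mul_le_mul_of_nonneg_right h1 (Real.exp_pos _).le
  _ = Real.exp (-(‖ξ‖ ^ α)) := one_mul _

lemma gauss_decay {α : ℝ} (hα : 0 < α) : ∀ t : ℝ, 0 ≤ t →
    Real.exp (-(t ^ α)) ≤ (8 * (Nat.ceil (3/α)).factorial) * (1+t) ^ (-(3:ℝ)) := by
  intro t ht
  set n := Nat.ceil (3/α) with hn
  have hfac : (1:ℝ) ≤ (n.factorial : ℝ) := by exact_mod_cast Nat.one_le_iff_ne_zero.2 n.factorial_ne_zero
  have h1t : (0:ℝ) < 1 + t := by linarith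
  rw [Real.rpow_neg h1t.le, show (3:ℝ) = ((3:ℕ):ℝ) by norm_num, Real.rpow_natCast]
  rw [← div_eq_mul_inv, le_div_iff₀ (by positivity)]
  -- goal : exp (-(t^α)) * (1+t)^3 ≤ 8 * n!
  have key : (1+t)^(3:ℕ) ≤ 8 * (n.factorial : ℝ) * Real.exp (t ^ α) := by
    rcases le_or_gt t 1 with h | h
    · have h8 : (1+t)^(3:ℕ) ≤ 8 := by
        calc (1+t)^(3:ℕ) ≤ 2^(3:ℕ) := pow_le_pow_left₀ (by linarith) (by linarith) 3
        _ = 8 := by norm_num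
      have h9 : (1:ℝ) ≤ Real.exp (t ^ α) := Real.one_le_exp (Real.rpow_nonneg ht α)
      nlinarith
    · have ht1 : (1:ℝ) ≤ t := h.le
      have e1 : (1+t)^(3:ℕ) ≤ (2*t)^(3:ℕ) := by
        apply pow_le_pow_left₀ (by linarith) (by linarith)
      have e2 : (2*t)^(3:ℕ) = 8 * t^(3:ℕ) := by ring
      have e3 : t^(3:ℕ) = t ^ ((3:ℕ):ℝ) := (Real.rpow_natCast t 3).symm
      have e4 : t ^ ((3:ℕ):ℝ) ≤ t ^ (α * n) := by
        apply Real.rpow_le_rpow_of_exponent_le ht1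
        have : (3:ℝ)/α ≤ (n:ℝ) := Nat.le_ceil _
        calc ((3:ℕ):ℝ) = α * (3/α) := by field_simp; norm_num
        _ ≤ α * n := by apply mul_le_mul_of_nonneg_left this hα.le
      have e5 : t ^ (α * n) = (t ^ α) ^ (n:ℕ) := by
        rw [Real.rpow_mul ht, Real.rpow_natCast]
      have e6 : (t ^ α) ^ (n:ℕ) ≤ (n.factorial : ℝ) * Real.exp (t ^ α) := by
        have h7 := Real.pow_div_factorial_le_exp (t ^ α) (Real.rpow_nonneg ht α) n
        rw [div_le_iff₀ (by positivity)] at h7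
        linarith [h7]
      calc (1+t)^(3:ℕ) ≤ 8 * t^(3:ℕ) := by rw [← e2]; exact e1
      _ = 8 * t ^ ((3:ℕ):ℝ) := by rw [e3]
      _ ≤ 8 * t ^ (α * n) := by linarith [e4]
      _ = 8 * (t ^ α) ^ (n:ℕ) := by rw [e5]
      _ ≤ 8 * ((n.factorial : ℝ) * Real.exp (t ^ α)) := by linarith [e6]
      _ = 8 * (n.factorial : ℝ) * Real.exp (t ^ α) := by ring
  calc Real.exp (-(t ^ α)) * (1+t)^(3:ℕ)
      ≤ Real.exp (-(t ^ α)) * (8 * (n.factorial : ℝ) * Real.exp (t ^ α)) :=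
        mul_le_mul_of_nonneg_left key (Real.exp_pos _).le
  _ = 8 * (n.factorial : ℝ) * (Real.exp (-(t ^ α)) * Real.exp (t ^ α)) := by ring
  _ = 8 * (n.factorial : ℝ) := by rw [← Real.exp_add]; simp

lemma gauss_integrable {α : ℝ} (hα : 0 < α) : Integrable (fun ξ : E2 => Real.exp (-(‖ξ‖ ^ α))) := by
  have hdim : (Module.finrank ℝ E2 : ℝ) < 3 := by
    rw [finrank_euclideanSpace_fin]; norm_num
  have hint := (integrable_one_add_norm (E := E2) (μ := volume) (r := 3) hdim).const_mul
    ((8:ℝ) * (Nat.ceil (3/α)).factorial)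
  apply hint.mono'
  · exact ((measurable_norm.pow_const α).neg.exp).aestronglyMeasurable
  · filter_upwards with ξ
    rw [Real.norm_eq_abs, abs_of_pos (Real.exp_pos _)]
    exact gauss_decay hα ‖ξ‖ (norm_nonneg ξ)

lemma F0_integrable {α : ℝ} (hα : 0 < α) (l : Fin 2) : Integrable (F0 α l) := by
  apply (gauss_integrable hα).mono'
  · apply Measurable.aestronglyMeasurable
    apply Measurable.mul
    · exact ((EuclideanSpace.proj l).continuous.measurable).div measurable_norm
    · exact (measurable_norm.pow_const α).neg.exp
  · filter_upwards with ξ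
    rw [Real.norm_eq_abs]
    exact F0_bound l ξ

end main


section integralpart

/-- the phase factor -/
noncomputable def phase (x ξ : E2) : ℂ := Complex.exp (Complex.I * ((⟪x,ξ⟫ : ℝ) : ℂ))

lemma phase_norm (x ξ : E2) : ‖phase x ξ‖ = 1 := by
  rw [phase, Complex.norm_exp]
  simp

lemma phase_cont (x : E2) : Continuous (phase x) := by
  apply Complex.continuous_exp.comp
  apply Continuous.mul continuous_const
  exact Complex.continuous_ofReal.comp (Continuous.inner continuous_const continuous_id)

lemma integrand_eq (α : ℝ) (l : Fin 2) (x ξ : E2) :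
    Complex.I * ((ξ l / ‖ξ‖ : ℝ) : ℂ) *
        Complex.exp (Complex.I * ((inner ℝ x ξ : ℝ) : ℂ) - ((‖ξ‖ ^ α : ℝ) : ℂ))
      = (Complex.I * ((F0 α l ξ : ℝ) : ℂ)) * phase x ξ := by
  rw [F0, phase, sub_eq_add_neg, Complex.exp_add]
  push_cast
  ring

lemma shift_integral (G : E2 → ℂ) (x a : E2) :
    ∫ ξ : E2, G (ξ + a) * phase x ξ
      = Complex.exp (-(Complex.I * ((⟪x,a⟫ : ℝ) : ℂ))) * ∫ ξ : E2, G ξ * phase x ξ := by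
  have key : ∀ ξ : E2, G (ξ + a) * phase x ξ
      = Complex.exp (-(Complex.I * ((⟪x,a⟫ : ℝ) : ℂ))) * (G (ξ + a) * phase x (ξ + a)) := by
    intro ξ
    have h1 : ((⟪x,ξ+a⟫ : ℝ) : ℂ) = ((⟪x,ξ⟫ : ℝ) : ℂ) + ((⟪x,a⟫ : ℝ) : ℂ) := by
      rw [inner_add_right]; push_cast; ring
    rw [phase, phase, h1, mul_add, Complex.exp_add]
    rw [show Complex.exp (-(Complex.I * ((⟪x,a⟫ : ℝ) : ℂ))) *
        (G (ξ + a) * (Complex.exp (Complex.I * ((⟪x,ξ⟫ : ℝ) : ℂ)) *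
          Complex.exp (Complex.I * ((⟪x,a⟫ : ℝ) : ℂ))))
        = G (ξ + a) * Complex.exp (Complex.I * ((⟪x,ξ⟫ : ℝ) : ℂ)) *
          (Complex.exp (-(Complex.I * ((⟪x,a⟫ : ℝ) : ℂ))) *
            Complex.exp (Complex.I * ((⟪x,a⟫ : ℝ) : ℂ))) from by ring,
      ← Complex.exp_add]
    simp
  simp_rw [key]
  rw [integral_const_mul _ _]
  congr 1
  exact integral_add_right_eq_self (fun ξ => G ξ * phase x ξ) a

lemma rpow_neg_three {y : ℝ} (hy : 0 < y) : y ^ (-(3:ℝ)) = (y^(3:ℕ))⁻¹ := by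
  rw [show (-(3:ℝ)) = -((3:ℕ):ℝ) by norm_num, Real.rpow_neg hy.le, Real.rpow_natCast]

end integralpart

set_option maxHeartbeats 1000000

/-- For `0 < α ≤ 1` and `l ∈ {1,2}`, `sup_x |x|² |R_l G_α(1,x)| < ∞`. -/
theorem riesz_kernel_weighted_bound
    (α : ℝ) (hα : 0 < α) (hα1 : α ≤ 1) (l : Fin 2) :
    ∃ C : ℝ, ∀ x : EuclideanSpace ℝ (Fin 2),
      ‖x‖ ^ 2 * ‖rieszKernel α l x‖ ≤ C := by
  classical
  set B1 : ℝ := ∫ ξ : E2, Real.exp (-(‖ξ‖ ^ α)) with hB1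
  set V : ℝ := (volume (ball (0:E2) 1)).toReal with hV
  set C1 : ℝ := ∫ ξ : E2, (1 + ‖ξ‖) ^ (-(3:ℝ)) with hC1
  have hB1nn : 0 ≤ B1 := integral_nonneg fun ξ => (Real.exp_pos _).le
  have hC1nn : 0 ≤ C1 := integral_nonneg fun ξ => Real.rpow_nonneg (by positivity) _
  have hVnn : 0 ≤ V := ENNReal.toReal_nonneg
  set G : E2 → ℂ := fun ξ => Complex.I * ((F0 α l ξ : ℝ) : ℂ) with hG
  have hGint : Integrable G := ((F0_integrable hα l).ofReal).const_mul Complex.I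
  have hGnorm : ∀ ξ, ‖G ξ‖ = |F0 α l ξ| := by
    intro ξ; rw [hG]; simp
  have hKeq : ∀ x : E2, rieszKernel α l x
      = ((((2 * Real.pi) ^ 2)⁻¹ : ℝ) : ℂ) * ∫ ξ : E2, G ξ * phase x ξ := by
    intro x
    rw [rieszKernel]
    congr 1
    exact integral_congr_ae (Filter.Eventually.of_forall fun ξ => integrand_eq α l x ξ)
  have hprod_int : ∀ (x a : E2), Integrable (fun ξ : E2 => G (ξ + a) * phase x ξ) := by
    intro x a
    have h1 := (hGint.comp_add_right a).bdd_mul (c := 1)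
      ((phase_cont x).aestronglyMeasurable)
      (Filter.Eventually.of_forall fun ξ => le_of_eq (phase_norm x ξ))
    exact h1.congr (Filter.Eventually.of_forall fun ξ => mul_comm _ _)
  have hprod_int0 : ∀ x : E2, Integrable (fun ξ : E2 => G ξ * phase x ξ) := by
    intro x
    have := hprod_int x 0
    simpa using this
  have hItg_le : ∀ x : E2, ‖∫ ξ : E2, G ξ * phase x ξ‖ ≤ B1 := by
    intro x
    refine (norm_integral_le_integral_norm _).trans ?_
    rw [hB1]
    apply integral_mono (hprod_int0 x).norm (gauss_integrable hα)
    intro ξ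
    show ‖G ξ * phase x ξ‖ ≤ Real.exp (-(‖ξ‖ ^ α))
    rw [norm_mul, phase_norm, mul_one, hGnorm]
    exact F0_bound l ξ
  have htp : (0:ℝ) < (2 * Real.pi)^2 := by positivity
  have habs : ∀ x : E2, ‖rieszKernel α l x‖
      = ((2 * Real.pi) ^ 2)⁻¹ * ‖∫ ξ : E2, G ξ * phase x ξ‖ := by
    intro x
    rw [hKeq x, norm_mul, Complex.norm_real, Real.norm_eq_abs,
      abs_of_pos (by positivity)]
  refine ⟨max (((2 * Real.pi) ^ 2)⁻¹ * B1)
    (((2 * Real.pi) ^ 2)⁻¹ * (Real.pi^2/8) * (128*V + 4000000000*C1)), fun x => ?_⟩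
  by_cases hx : ‖x‖ ≤ 1
  · refine le_max_of_le_left ?_
    rw [habs x]
    calc ‖x‖^2 * (((2 * Real.pi) ^ 2)⁻¹ * ‖∫ ξ : E2, G ξ * phase x ξ‖)
        ≤ 1 * (((2 * Real.pi) ^ 2)⁻¹ * B1) := by
          apply mul_le_mul _ _ (by positivity) (by norm_num)
          · nlinarith [norm_nonneg x]
          · exact mul_le_mul_of_nonneg_left (hItg_le x) (by positivity)
    _ = ((2 * Real.pi) ^ 2)⁻¹ * B1 := one_mul _
  · push_neg at hx
    have hx0 : (0:ℝ) < ‖x‖ := by linarith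
    have hxne : x ≠ 0 := by
      intro hcon; rw [hcon] at hx0; simp at hx0
    set h : E2 := (Real.pi/‖x‖^2) • x with hh
    have hnh : ‖h‖ = Real.pi/‖x‖ := by
      rw [hh, norm_smul, Real.norm_eq_abs, abs_of_pos (by positivity)]
      field_simp
    have hh0 : 0 < ‖h‖ := by rw [hnh]; positivity
    have hip : ∀ c : ℝ, (⟪x, c • h⟫ : ℝ) = c * Real.pi := by
      intro c
      rw [hh, smul_smul, real_inner_smul_right, real_inner_self_eq_norm_sq]
      field_simp
    have hip1 : (⟪x, h⟫ : ℝ) = Real.pi := by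
      have := hip 1; rwa [one_smul, one_mul] at this
    set Itg : ℂ := ∫ ξ : E2, G ξ * phase x ξ with hItg
    have hT1 : ∫ ξ : E2, G (ξ + h) * phase x ξ = -Itg := by
      rw [shift_integral, hip1]
      rw [show Complex.I * ((Real.pi : ℝ) : ℂ) = (Real.pi : ℂ) * Complex.I by ring,
        Complex.exp_neg, Complex.exp_pi_mul_I]
      rw [show ((-1:ℂ))⁻¹ = -1 by norm_num, hItg]
      ring
    have hT2 : ∫ ξ : E2, G (ξ + (2:ℝ) • h) * phase x ξ = Itg := by
      rw [shift_integral, hip 2]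
      rw [show Complex.I * (((2 * Real.pi : ℝ)) : ℂ) = 2 * (Real.pi : ℂ) * Complex.I by
        push_cast; ring, Complex.exp_neg, Complex.exp_two_pi_mul_I]
      rw [inv_one, one_mul, hItg]
    have hT3 : ∫ ξ : E2, G (ξ + (3:ℝ) • h) * phase x ξ = -Itg := by
      rw [shift_integral, hip 3]
      have : Complex.exp (Complex.I * (((3 * Real.pi : ℝ)) : ℂ))
          = Complex.exp (2 * (Real.pi:ℂ) * Complex.I) * Complex.exp ((Real.pi:ℂ) * Complex.I) := by
        rw [← Complex.exp_add]
        congr 1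
        push_cast
        ring
      rw [Complex.exp_neg, this, Complex.exp_two_pi_mul_I, Complex.exp_pi_mul_I, one_mul,
        show ((-1:ℂ))⁻¹ = -1 by norm_num, hItg]
      ring
    set Dc : E2 → ℂ := fun ξ => G ξ - 3*G (ξ + h) + 3*G (ξ + (2:ℝ) • h) - G (ξ + (3:ℝ) • h)
      with hDc
    have hDcint : Integrable (fun ξ => Dc ξ * phase x ξ) := by
      have e : (fun ξ => Dc ξ * phase x ξ) = fun ξ =>
          (G ξ * phase x ξ - (3:ℂ) * (G (ξ + h) * phase x ξ)
            + (3:ℂ) * (G (ξ + (2:ℝ) • h) * phase x ξ)) - G (ξ + (3:ℝ) • h) * phase x ξ := by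
        funext ξ; simp only [hDc]; ring
      rw [e]
      exact (((hprod_int0 x).sub ((hprod_int x h).const_mul 3)).add
        ((hprod_int x ((2:ℝ) • h)).const_mul 3)).sub (hprod_int x ((3:ℝ) • h))
    have hsum : ∫ ξ : E2, Dc ξ * phase x ξ = 8 * Itg := by
      have e : (fun ξ => Dc ξ * phase x ξ) = fun ξ =>
          (G ξ * phase x ξ - (3:ℂ) * (G (ξ + h) * phase x ξ)
            + (3:ℂ) * (G (ξ + (2:ℝ) • h) * phase x ξ)) - G (ξ + (3:ℝ) • h) * phase x ξ := by
        funext ξ; simp only [hDc]; ring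
      rw [e, integral_sub, integral_add, integral_sub]
      · rw [integral_const_mul, integral_const_mul, hT1, hT2, hT3, ← hItg]
        ring
      · exact hprod_int0 x
      · exact (hprod_int x h).const_mul 3
      · exact ((hprod_int0 x).sub ((hprod_int x h).const_mul 3))
      · exact (hprod_int x ((2:ℝ) • h)).const_mul 3
      · exact ((hprod_int0 x).sub ((hprod_int x h).const_mul 3)).add
          ((hprod_int x ((2:ℝ) • h)).const_mul 3)
      · exact hprod_int x ((3:ℝ) • h)
    -- the real finite difference
    set DF : E2 → ℝ := fun ξ => F0 α l ξ - 3*F0 α l (ξ + h) + 3*F0 α l (ξ + (2:ℝ) • h)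
      - F0 α l (ξ + (3:ℝ) • h) with hDF
    have hDcnorm : ∀ ξ, ‖Dc ξ‖ = |DF ξ| := by
      intro ξ
      have e : Dc ξ = Complex.I * ((DF ξ : ℝ) : ℂ) := by
        simp only [hDc, hDF, hG]
        push_cast
        ring
      rw [e]
      simp
    have hDFint : Integrable DF := by
      have h0 := F0_integrable hα l
      exact ((h0.sub ((h0.comp_add_right h).const_mul 3)).add
        ((h0.comp_add_right ((2:ℝ) • h)).const_mul 3)).sub (h0.comp_add_right ((3:ℝ) • h))
    set R : ℝ := 4 * ‖h‖ with hR
    have hR0 : 0 < R := by rw [hR]; positivity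
    -- pointwise bound on |DF|
    have hbnd : ∀ ξ : E2, |DF ξ| ≤ (ball (0:E2) R).indicator (fun _ => (8:ℝ)) ξ
        + 16000000000 * ‖h‖^3 * ((R + ‖ξ‖) ^ (-(3:ℝ))) := by
      intro ξ
      by_cases hmem : ξ ∈ ball (0:E2) R
      · rw [indicator_of_mem hmem]
        have b0 : ∀ η : E2, |F0 α l η| ≤ 1 := by
          intro η
          refine (F0_bound l η).trans ?_
          exact Real.exp_le_one_iff.2 (neg_nonpos.2 (Real.rpow_nonneg (norm_nonneg _) _))
        have : |DF ξ| ≤ 8 := by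
          simp only [hDF]
          have t0 := b0 ξ; have t1 := b0 (ξ + h); have t2 := b0 (ξ + (2:ℝ) • h)
          have t3 := b0 (ξ + (3:ℝ) • h)
          have habs1 : |F0 α l ξ - 3*F0 α l (ξ + h) + 3*F0 α l (ξ + (2:ℝ) • h)
              - F0 α l (ξ + (3:ℝ) • h)| ≤ |F0 α l ξ| + 3*|F0 α l (ξ + h)|
              + 3*|F0 α l (ξ + (2:ℝ) • h)| + |F0 α l (ξ + (3:ℝ) • h)| := by
            have := abs_sub (F0 α l ξ - 3*F0 α l (ξ + h) + 3*F0 α l (ξ + (2:ℝ) • h))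
              (F0 α l (ξ + (3:ℝ) • h))
            have h2 := abs_add_le (F0 α l ξ - 3*F0 α l (ξ + h)) (3*F0 α l (ξ + (2:ℝ) • h))
            have h3 := abs_sub (F0 α l ξ) (3*F0 α l (ξ + h))
            rw [abs_mul] at h2
            have e3 : |(3:ℝ)| = 3 := by norm_num
            rw [e3] at h2
            have h4 : |3*F0 α l (ξ + h)| = 3 * |F0 α l (ξ + h)| := by
              rw [abs_mul, e3]
            rw [h4] at h3
            linarith
          linarith
        have hnn : 0 ≤ 16000000000 * ‖h‖^3 * ((R + ‖ξ‖) ^ (-(3:ℝ))) := by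
          apply mul_nonneg (by positivity) (Real.rpow_nonneg (by positivity) _)
        linarith
      · rw [indicator_of_notMem hmem]
        have hfar : R ≤ ‖ξ‖ := by
          rw [mem_ball, dist_zero_right] at hmem
          linarith [not_lt.1 hmem]
        have hξ0 : 0 < ‖ξ‖ := lt_of_lt_of_le hR0 hfar
        have hkey : |DF ξ| ≤ 2000000000 * ‖h‖^3 / ‖ξ‖^3 := by
          simp only [hDF]
          rw [F0_eq_Fker hα l ξ, F0_eq_Fker hα l (ξ + h), F0_eq_Fker hα l (ξ + (2:ℝ) • h),
            F0_eq_Fker hα l (ξ + (3:ℝ) • h)]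
          exact key_estimate α hα hα1 l ξ h hh0 (by rw [← hR]; exact hfar)
        have hgoal : 2000000000*‖h‖^3/‖ξ‖^3 ≤ 16000000000*‖h‖^3/((R+‖ξ‖)^3) := by
          rw [div_le_div_iff₀ (by positivity) (by positivity)]
          have hRle : R + ‖ξ‖ ≤ 2*‖ξ‖ := by linarith
          have hcube : (R+‖ξ‖)^3 ≤ 8*‖ξ‖^3 := by
            have := pow_le_pow_left₀ (by positivity : (0:ℝ) ≤ R + ‖ξ‖) hRle 3
            nlinarith [this]
          nlinarith [pow_nonneg (norm_nonneg h) 3, pow_nonneg hξ0.le 3,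
            pow_nonneg (by positivity : (0:ℝ) ≤ R+‖ξ‖) 3]
        refine hkey.trans (hgoal.trans (le_of_eq ?_))
        rw [zero_add, rpow_neg_three (by positivity : (0:ℝ) < R + ‖ξ‖), div_eq_mul_inv]
    -- integral of the dominating function
    have hPeq : ∀ ξ : E2, (R + ‖ξ‖) ^ (-(3:ℝ)) = R ^ (-(3:ℝ)) * (1 + ‖R⁻¹ • ξ‖) ^ (-(3:ℝ)) := by
      intro ξ
      have hnsm : ‖R⁻¹ • ξ‖ = R⁻¹ * ‖ξ‖ := by
        rw [norm_smul, Real.norm_eq_abs, abs_of_pos (inv_pos.2 hR0)]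
      have hsplit : R + ‖ξ‖ = R * (1 + R⁻¹ * ‖ξ‖) := by
        field_simp
      rw [hnsm, hsplit, Real.mul_rpow hR0.le (by positivity)]
    have hdim3 : (Module.finrank ℝ E2 : ℝ) < 3 := by
      rw [finrank_euclideanSpace_fin]; norm_num
    have hg1 : Integrable (fun ξ : E2 => (1 + ‖ξ‖) ^ (-(3:ℝ))) :=
      integrable_one_add_norm hdim3
    have hPint : Integrable (fun ξ : E2 => (R + ‖ξ‖) ^ (-(3:ℝ))) := by
      have hcomp : Integrable (fun ξ : E2 => (1 + ‖R⁻¹ • ξ‖) ^ (-(3:ℝ))) := by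
        have := hg1.comp_smul (R := R⁻¹) (inv_ne_zero hR0.ne')
        simpa using this
      exact (hcomp.const_mul (R ^ (-(3:ℝ)))).congr
        (Filter.Eventually.of_forall fun ξ => (hPeq ξ).symm)
    have hPval : ∫ ξ : E2, (R + ‖ξ‖) ^ (-(3:ℝ)) = C1 / R := by
      rw [integral_congr_ae (Filter.Eventually.of_forall hPeq), integral_const_mul,
        Measure.integral_comp_inv_smul volume (fun ξ : E2 => (1 + ‖ξ‖) ^ (-(3:ℝ))) R]
      rw [finrank_euclideanSpace_fin, smul_eq_mul, ← hC1,
        abs_of_pos (by positivity : (0:ℝ) < R^2),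
        rpow_neg_three hR0]
      field_simp
    have hIndint : Integrable ((ball (0:E2) R).indicator (fun _ => (8:ℝ))) := by
      exact (integrableOn_const measure_ball_lt_top.ne).integrable_indicator
        measurableSet_ball
    have hvolball : (volume (ball (0:E2) R)).toReal = R^2 * V := by
      rw [Measure.addHaar_ball volume (0:E2) hR0.le, finrank_euclideanSpace_fin,
        ENNReal.toReal_mul, ENNReal.toReal_ofReal (by positivity), ← hV]
    have hDFbound : ∫ ξ : E2, |DF ξ| ≤ 8 * (R^2 * V) + 16000000000*‖h‖^3 * (C1/R) := by
      have hmono := integral_mono hDFint.abs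
        (hIndint.add (hPint.const_mul (16000000000*‖h‖^3))) hbnd
      simp only [Pi.add_apply] at hmono
      rw [integral_add hIndint (hPint.const_mul (16000000000*‖h‖^3)),
        integral_const_mul, hPval, integral_indicator_const _ measurableSet_ball,
        smul_eq_mul, measureReal_def, hvolball] at hmono
      linarith [hmono]
    have hItg8 : ‖Itg‖ ≤ (1/8) * (8 * (R^2*V) + 16000000000*‖h‖^3*(C1/R)) := by
      have h1 : ‖(8:ℂ) * Itg‖ ≤ ∫ ξ : E2, |DF ξ| := by
        rw [← hsum]
        refine (norm_integral_le_integral_norm _).trans (le_of_eq ?_)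
        exact integral_congr_ae (Filter.Eventually.of_forall fun ξ => by
          show ‖Dc ξ * phase x ξ‖ = |DF ξ|
          rw [norm_mul, phase_norm, mul_one, hDcnorm])
      rw [norm_mul] at h1
      have h8 : ‖(8:ℂ)‖ = 8 := by norm_num
      rw [h8] at h1
      linarith
    have hhx : ‖x‖^2 * ‖h‖^2 = Real.pi^2 := by
      rw [hnh]
      field_simp
    have hItg2 : ‖Itg‖ ≤ (1/8) * (128*V + 4000000000*C1) * ‖h‖^2 := by
      have e1 : 8 * (R^2*V) = 128*V*‖h‖^2 := by rw [hR]; ring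
      have e2 : 16000000000*‖h‖^3*(C1/R) = 4000000000*C1*‖h‖^2 := by
        rw [hR]
        field_simp
        ring
      rw [e1, e2] at hItg8
      calc ‖Itg‖ ≤ (1/8) * (128*V*‖h‖^2 + 4000000000*C1*‖h‖^2) := hItg8
      _ = (1/8) * (128*V + 4000000000*C1) * ‖h‖^2 := by ring
    refine le_max_of_le_right ?_
    rw [habs x, ← hItg]
    calc ‖x‖^2 * (((2 * Real.pi) ^ 2)⁻¹ * ‖Itg‖)
        ≤ ‖x‖^2 * (((2 * Real.pi) ^ 2)⁻¹ * ((1/8) * (128*V + 4000000000*C1) * ‖h‖^2)) := by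
          apply mul_le_mul_of_nonneg_left _ (by positivity)
          exact mul_le_mul_of_nonneg_left hItg2 (by positivity)
    _ = ((2 * Real.pi) ^ 2)⁻¹ * ((1/8) * (128*V + 4000000000*C1)) * (‖x‖^2 * ‖h‖^2) := by
          ring
    _ = ((2 * Real.pi) ^ 2)⁻¹ * (Real.pi^2/8) * (128*V + 4000000000*C1) := by
          rw [hhx]
          ring
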